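/- (Theorem 2, condition (16a).) Let r ∈ ℕ and J = Fin (r+1); let p : J → J → ℝ be row-stochastic (p i j ≥ 0, ∑_j p i j = 1) with stationary distribution π (π j > 0, ∑_j π j = 1, ∑_i π i · p i j = π j). Let Ā be an n×n real matrix, B̄ an n×n_w real matrix, W an n_w×n_w real positive semidefinite matrix, V an m×m real positive semidefinite matrix, C̄ an m×n real matrix, and for each j ∈ J let ψ_j be an m×m real matrix and L_j an n×m real matrix; set F_j = I − L_j ψ_j C̄ and X_j = L_j ψ_j, and define the coupled operator 𝔈_j(P₀, …, P_r) = ∑_{i ∈ J} p i j · (π i / π j) · ( F_j (Ā P_i Āᵀ + B̄ W B̄ᵀ) F_jᵀ + X_j V X_jᵀ ). Suppose there exist real symmetric positive definite matrices P₀, …, P_r such that 𝔈_j(P₀, …, P_r) ⪯ P_j for every j ∈ J. Then for every j ∈ J with ψ_j = 0, every eigenvalue λ ∈ ℂ of Ā (of its entrywise complexification) satisfies p j j · |λ|² ≤ 1. -/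

import Mathlib

open Matrix

section AuxStmt9

lemma aux_sum_quad {n : ℕ} {ι : Type*} (s : Finset ι) (f : ι → Matrix (Fin n) (Fin n) ℝ)
    (x : Fin n → ℝ) (h : ∀ i ∈ s, 0 ≤ x ⬝ᵥ (f i *ᵥ x)) :
    0 ≤ x ⬝ᵥ ((∑ i ∈ s, f i) *ᵥ x) := by
  induction s using Finset.cons_induction with
  | empty => simp
  | cons a s ha ih =>
    rw [Finset.sum_cons, add_mulVec, dotProduct_add]
    exact add_nonneg (h a (Finset.mem_cons_self a s))
      (ih fun i hi => h i (Finset.mem_cons_of_mem hi))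

lemma aux_eig_parts {n : ℕ} (A : Matrix (Fin n) (Fin n) ℝ) (μ : ℂ) (w : Fin n → ℂ)
    (hw : (A.map (algebraMap ℝ ℂ)) *ᵥ w = μ • w) :
    A *ᵥ (fun i => (w i).re) = μ.re • (fun i => (w i).re) - μ.im • (fun i => (w i).im) ∧
    A *ᵥ (fun i => (w i).im) = μ.re • (fun i => (w i).im) + μ.im • (fun i => (w i).re) := by
  constructor <;> funext i <;>
  · have := congrFun hw i
    simp only [mulVec, dotProduct, Matrix.map_apply, Pi.smul_apply, smul_eq_mul,
      Pi.sub_apply, Pi.add_apply] at this ⊢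
    have h2 := congrArg Complex.re this
    have h3 := congrArg Complex.im this
    simp [Complex.re_sum, Complex.im_sum, Complex.mul_re, Complex.mul_im] at h2 h3
    simp [h2, h3]

lemma aux_star_spec {n : ℕ} (M : Matrix (Fin n) (Fin n) ℂ) (lam : ℂ)
    (h : lam ∈ spectrum ℂ M) : star lam ∈ spectrum ℂ Mᴴ := by
  rw [spectrum.mem_iff] at h ⊢
  intro hu; apply h
  have := hu.star
  rwa [star_sub, ← algebraMap_star_comm, star_star, star_eq_conjTranspose,
    conjTranspose_conjTranspose] at this

lemma aux_eigvec {n : ℕ} (M : Matrix (Fin n) (Fin n) ℂ) (lam : ℂ) (h : lam ∈ spectrum ℂ M) :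
    ∃ v : Fin n → ℂ, v ≠ 0 ∧ M *ᵥ v = lam • v := by
  rw [← AlgEquiv.spectrum_eq (Matrix.toLinAlgEquiv' (R := ℂ) (n := Fin n)),
    ← Module.End.hasEigenvalue_iff_mem_spectrum] at h
  obtain ⟨v, hv, hv0⟩ := Submodule.exists_mem_ne_zero_of_ne_bot h
  exact ⟨v, hv0, by simpa [Matrix.toLinAlgEquiv'_apply] using Module.End.mem_eigenspace_iff.mp hv⟩

end AuxStmt9

/-- Theorem 2 of the paper, condition (16a): if the coupled covariance inequality
`𝔈_j(P₀,…,P_r) ⪯ P_j` is feasible with symmetric positive definite matrices, then for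
every mode `j` with no received measurement (`ψ_j = 0`) and every eigenvalue `λ` of `Ā`,
one has `p j j * |λ|² ≤ 1`. -/
theorem stmt_9 (r n nw m : ℕ)
    (p : Fin (r + 1) → Fin (r + 1) → ℝ) (π : Fin (r + 1) → ℝ)
    (hp0 : ∀ i j, 0 ≤ p i j) (hp1 : ∀ i, ∑ j, p i j = 1)
    (hπpos : ∀ j, 0 < π j) (hπ1 : ∑ j, π j = 1)
    (hstat : ∀ j, ∑ i, π i * p i j = π j)
    (Abar : Matrix (Fin n) (Fin n) ℝ) (Bbar : Matrix (Fin n) (Fin nw) ℝ)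
    (Wm : Matrix (Fin nw) (Fin nw) ℝ) (hWm : Wm.PosSemidef)
    (Vm : Matrix (Fin m) (Fin m) ℝ) (hVm : Vm.PosSemidef)
    (Cbar : Matrix (Fin m) (Fin n) ℝ)
    (ψ : Fin (r + 1) → Matrix (Fin m) (Fin m) ℝ)
    (L : Fin (r + 1) → Matrix (Fin n) (Fin m) ℝ)
    (F : Fin (r + 1) → Matrix (Fin n) (Fin n) ℝ)
    (hF : ∀ j, F j = 1 - L j * ψ j * Cbar)
    (X : Fin (r + 1) → Matrix (Fin n) (Fin m) ℝ)
    (hX : ∀ j, X j = L j * ψ j)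
    (hfeas : ∃ Pmat : Fin (r + 1) → Matrix (Fin n) (Fin n) ℝ,
      (∀ j, (Pmat j).IsSymm) ∧ (∀ j, (Pmat j).PosDef) ∧
      (∀ j, (Pmat j - ∑ i, (p i j * (π i / π j)) •
        (F j * (Abar * Pmat i * Abarᵀ + Bbar * Wm * Bbarᵀ) * (F j)ᵀ
          + X j * Vm * (X j)ᵀ)).PosSemidef))
    (j : Fin (r + 1)) (hψ : ψ j = 0)
    (lam : ℂ) (hlam : lam ∈ spectrum ℂ (Abar.map (algebraMap ℝ ℂ))) :
    p j j * ‖lam‖ ^ 2 ≤ 1 := by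
  obtain ⟨P, hsymm, hpd, hineq⟩ := hfeas
  have hFj : F j = 1 := by rw [hF, hψ]; simp
  have hXj : X j = 0 := by rw [hX, hψ]; simp
  have hcj : p j j * (π j / π j) = p j j := by
    rw [div_self (hπpos j).ne', mul_one]
  have hGq : ∀ i (x : Fin n → ℝ),
      0 ≤ x ⬝ᵥ ((Abar * P i * Abarᵀ + Bbar * Wm * Bbarᵀ) *ᵥ x) := by
    intro i x
    have h1 : (Abar * P i * Abarᵀ).PosSemidef := by
      rw [← conjTranspose_eq_transpose_of_trivial]
      exact (hpd i).posSemidef.mul_mul_conjTranspose_same Abar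
    have h2 : (Bbar * Wm * Bbarᵀ).PosSemidef := by
      rw [← conjTranspose_eq_transpose_of_trivial]
      exact hWm.mul_mul_conjTranspose_same Bbar
    simpa using (h1.add h2).dotProduct_mulVec_nonneg x
  -- quadratic form nonnegativity of P j - p j j • (A (P j) Aᵀ)
  have hQ : ∀ x : Fin n → ℝ,
      0 ≤ x ⬝ᵥ ((P j - (p j j) • (Abar * P j * Abarᵀ)) *ᵥ x) := by
    intro x
    have h0 := (hineq j).dotProduct_mulVec_nonneg x
    rw [hFj, hXj] at h0
    simp only [Matrix.one_mul, Matrix.mul_one, Matrix.zero_mul, Matrix.mul_zero,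
      transpose_one, add_zero, star_trivial] at h0
    have hid : P j - (p j j) • (Abar * P j * Abarᵀ)
        = (P j - ∑ i, (p i j * (π i / π j)) •
            (Abar * P i * Abarᵀ + Bbar * Wm * Bbarᵀ))
          + (∑ i ∈ Finset.univ.erase j, (p i j * (π i / π j)) •
            (Abar * P i * Abarᵀ + Bbar * Wm * Bbarᵀ))
          + (p j j) • (Bbar * Wm * Bbarᵀ) := by
      rw [← Finset.add_sum_erase _ _ (Finset.mem_univ j), hcj, smul_add]
      abel
    rw [hid, add_mulVec, add_mulVec, dotProduct_add, dotProduct_add]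
    have t1 : 0 ≤ x ⬝ᵥ ((∑ i ∈ Finset.univ.erase j, (p i j * (π i / π j)) •
        (Abar * P i * Abarᵀ + Bbar * Wm * Bbarᵀ)) *ᵥ x) := by
      refine aux_sum_quad _ _ _ fun i _ => ?_
      rw [smul_mulVec, dotProduct_smul, smul_eq_mul]
      exact mul_nonneg (mul_nonneg (hp0 i j) (div_nonneg (hπpos i).le (hπpos j).le)) (hGq i x)
    have t2 : 0 ≤ x ⬝ᵥ (((p j j) • (Bbar * Wm * Bbarᵀ)) *ᵥ x) := by
      rw [smul_mulVec, dotProduct_smul, smul_eq_mul]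
      refine mul_nonneg (hp0 j j) ?_
      have h2 : (Bbar * Wm * Bbarᵀ).PosSemidef := by
        rw [← conjTranspose_eq_transpose_of_trivial]
        exact hWm.mul_mul_conjTranspose_same Bbar
      simpa using h2.dotProduct_mulVec_nonneg x
    exact add_nonneg (add_nonneg h0 t1) t2
  -- eigenvector of Abarᵀ with eigenvalue star lam
  have hspec : star lam ∈ spectrum ℂ ((Abarᵀ).map (algebraMap ℝ ℂ)) := by
    have := aux_star_spec _ _ hlam
    have hMH : (Abar.map (algebraMap ℝ ℂ))ᴴ = (Abarᵀ).map (algebraMap ℝ ℂ) := by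
      ext i k
      simp [conjTranspose_apply, Matrix.map_apply, Complex.conj_ofReal]
    rwa [hMH] at this
  obtain ⟨w, hw0, hw⟩ := aux_eigvec _ _ hspec
  obtain ⟨hu, hv⟩ := aux_eig_parts (Abarᵀ) (star lam) w hw
  set u : Fin n → ℝ := fun i => (w i).re with hudef
  set v : Fin n → ℝ := fun i => (w i).im with hvdef
  set a : ℝ := (star lam).re
  set b : ℝ := (star lam).im
  -- quadratic form of A P Aᵀ via transpose mulVec
  have hform : ∀ x : Fin n → ℝ,
      x ⬝ᵥ ((Abar * P j * Abarᵀ) *ᵥ x) = (Abarᵀ *ᵥ x) ⬝ᵥ (P j *ᵥ (Abarᵀ *ᵥ x)) := by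
    intro x
    rw [← mulVec_mulVec, ← mulVec_mulVec, dotProduct_mulVec x Abar, ← mulVec_transpose]
  have hsymmform : ∀ x y : Fin n → ℝ, x ⬝ᵥ (P j *ᵥ y) = y ⬝ᵥ (P j *ᵥ x) := by
    intro x y
    rw [dotProduct_mulVec x, ← mulVec_transpose, (hsymm j).eq, dotProduct_comm]
  set S1 : ℝ := u ⬝ᵥ (P j *ᵥ u)
  set S2 : ℝ := v ⬝ᵥ (P j *ᵥ v)
  set T : ℝ := u ⬝ᵥ (P j *ᵥ v)
  have key : 0 ≤ (S1 + S2) - p j j * ((a^2 + b^2) * (S1 + S2)) := by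
    have q1 := hQ u
    have q2 := hQ v
    rw [sub_mulVec, dotProduct_sub, smul_mulVec, dotProduct_smul, smul_eq_mul,
      hform] at q1 q2
    rw [hu] at q1
    rw [hv] at q2
    have e1 : (a • u - b • v) ⬝ᵥ (P j *ᵥ (a • u - b • v))
        = a^2 * S1 - 2*a*b*T + b^2 * S2 := by
      rw [sub_dotProduct, smul_dotProduct, smul_dotProduct, mulVec_sub, mulVec_smul,
        mulVec_smul, dotProduct_sub, dotProduct_sub, dotProduct_smul, dotProduct_smul,
        dotProduct_smul, dotProduct_smul]
      have := hsymmform u v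
      simp only [smul_eq_mul]
      rw [show v ⬝ᵥ (P j *ᵥ u) = T from (hsymmform v u).trans rfl]
      ring
    have e2 : (a • v + b • u) ⬝ᵥ (P j *ᵥ (a • v + b • u))
        = a^2 * S2 + 2*a*b*T + b^2 * S1 := by
      rw [add_dotProduct, smul_dotProduct, smul_dotProduct, mulVec_add, mulVec_smul,
        mulVec_smul, dotProduct_add, dotProduct_add, dotProduct_smul, dotProduct_smul,
        dotProduct_smul, dotProduct_smul]
      simp only [smul_eq_mul]
      rw [show v ⬝ᵥ (P j *ᵥ u) = T from (hsymmform v u).trans rfl]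
      ring
    rw [e1] at q1
    rw [e2] at q2
    nlinarith [q1, q2]
  have hSpos : 0 < S1 + S2 := by
    have hne : u ≠ 0 ∨ v ≠ 0 := by
      by_contra h
      push_neg at h
      apply hw0
      funext i
      have h1 := congrFun h.1 i
      have h2 := congrFun h.2 i
      exact Complex.ext (by simpa using h1) (by simpa using h2)
    have hS1 : 0 ≤ S1 := by simpa using (hpd j).posSemidef.dotProduct_mulVec_nonneg u
    have hS2 : 0 ≤ S2 := by simpa using (hpd j).posSemidef.dotProduct_mulVec_nonneg v
    rcases hne with h | h
    · have : 0 < S1 := by simpa using (hpd j).dotProduct_mulVec_pos h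
      linarith
    · have : 0 < S2 := by simpa using (hpd j).dotProduct_mulVec_pos h
      linarith
  have habs : ‖lam‖ ^ 2 = a^2 + b^2 := by
    rw [Complex.sq_norm, Complex.normSq_apply]
    simp [a, b]
    ring
  rw [habs]
  nlinarith [key, hSpos]
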